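/- Let H be a real normed space of dimension at least two, and fix an integer n ≥ 3. Then the parallelogram law ‖x + y‖² + ‖x − y‖² = 2‖x‖² + 2‖y‖² holds for all x, y ∈ H (i.e. the norm of H is induced by an inner product) if and only if the identity ∑_{I ⊆ {1,…,n}} (−1)^{|I|} ‖x_I‖² = 0 holds for all x_1, …, x_n ∈ H. -/

import Mathlib

open Finset

/-- Iterated difference of the squared norm: `Fd [x₁,…,xₘ] t = ∑_{S⊆[m]} (-1)^{|S|} ‖x_S + t‖²`. -/
private def Fd {H : Type*} [NormedAddCommGroup H] : List H → H → ℝ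
  | [], t => ‖t‖ ^ 2
  | x :: L, t => Fd L t - Fd L (t + x)

private lemma Fd_nil {H : Type*} [NormedAddCommGroup H] (t : H) : Fd [] t = ‖t‖ ^ 2 := rfl

private lemma Fd_cons {H : Type*} [NormedAddCommGroup H] (x : H) (L : List H) (t : H) :
    Fd (x :: L) t = Fd L t - Fd L (t + x) := rfl

private lemma Fd_swap {H : Type*} [NormedAddCommGroup H] (a b : H) (L : List H) (t : H) :
    Fd (a :: b :: L) t = Fd (b :: a :: L) t := by
  simp only [Fd_cons]
  rw [add_right_comm t b a]
  ring

private lemma Fd_perm {H : Type*} [NormedAddCommGroup H] {L L' : List H} (hp : L.Perm L') :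
    ∀ t : H, Fd L t = Fd L' t := by
  induction hp with
  | nil => intro t; rfl
  | cons x _ ih => intro t; simp only [Fd_cons, ih]
  | swap x y l => intro t; exact Fd_swap y x l t
  | trans _ _ ih1 ih2 => intro t; rw [ih1, ih2]

private lemma bridge {H : Type*} [NormedAddCommGroup H] {ι : Type*} [DecidableEq ι]
    (x : ι → H) (s : Finset ι) : ∀ t : H,
    ∑ I ∈ s.powerset, (-1 : ℝ) ^ I.card * ‖t + ∑ i ∈ I, x i‖ ^ 2 = Fd (s.toList.map x) t := by
  induction s using Finset.cons_induction with
  | empty => intro t; simp [Fd]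
  | cons a s ha ih =>
    intro t
    rw [Finset.cons_eq_insert, Finset.sum_powerset_insert ha]
    have h2 : ∑ I ∈ s.powerset, (-1 : ℝ) ^ (insert a I).card * ‖t + ∑ i ∈ insert a I, x i‖ ^ 2
        = ∑ I ∈ s.powerset, -((-1 : ℝ) ^ I.card * ‖(t + x a) + ∑ i ∈ I, x i‖ ^ 2) := by
      refine Finset.sum_congr rfl fun I hI => ?_
      have haI : a ∉ I := fun hm => ha (Finset.mem_powerset.1 hI hm)
      rw [Finset.card_insert_of_notMem haI, Finset.sum_insert haI, ← add_assoc]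
      ring
    rw [h2, Finset.sum_neg_distrib, ih t, ih (t + x a)]
    have hperm : (((insert a s).toList).map x).Perm (x a :: s.toList.map x) := by
      simpa using (Finset.toList_insert ha).map x
    rw [Fd_perm hperm t, Fd_cons]
    ring

private lemma Fd_two {E : Type*} [NormedAddCommGroup E] [InnerProductSpace ℝ E] (y z t : E) :
    Fd [y, z] t = 2 * (inner ℝ y z : ℝ) := by
  simp only [Fd_cons, Fd_nil]
  rw [norm_add_sq_real t z, norm_add_sq_real (t + y) z, norm_add_sq_real t y, inner_add_left]
  ring

private lemma Fd_ge3 {E : Type*} [NormedAddCommGroup E] [InnerProductSpace ℝ E] :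
    ∀ L : List E, 3 ≤ L.length → ∀ t : E, Fd L t = 0 := by
  intro L
  induction L with
  | nil => simp
  | cons a M ih =>
    intro hlen t
    rw [Fd_cons]
    rcases Nat.lt_or_ge M.length 3 with hM | hM
    · have h2 : M.length = 2 := by simp only [List.length_cons] at hlen; omega
      obtain ⟨y, z, rfl⟩ := List.length_eq_two.1 h2
      rw [Fd_two, Fd_two, sub_self]
    · rw [ih hM t, ih hM (t + a), sub_self]

private lemma Fd_homog {H : Type*} [NormedAddCommGroup H] [NormedSpace ℝ H] :
    ∀ (L : List H) (t : H), Fd (L.map (fun y => y + y)) (t + t) = 4 * Fd L t := by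
  intro L
  induction L with
  | nil =>
    intro t
    simp only [List.map_nil, Fd_nil]
    rw [← two_smul ℝ t, norm_smul]
    simp
    ring
  | cons x L ih =>
    intro t
    simp only [List.map_cons, Fd_cons]
    rw [ih t, show t + t + (x + x) = (t + x) + (t + x) by abel, ih (t + x)]
    ring

private lemma Fd_step {H : Type*} [NormedAddCommGroup H] [NormedSpace ℝ H] {m : ℕ} (hm : 3 ≤ m)
    (h : ∀ L : List H, L.length = m + 1 → ∀ t, Fd L t = 0) :
    ∀ L : List H, L.length = m → ∀ t, Fd L t = 0 := by
  have const : ∀ M : List H, M.length = m → ∀ t u : H, Fd M (t + u) = Fd M t := by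
    intro M hM t u
    have h0 := h (u :: M) (by simp [hM]) t
    rw [Fd_cons] at h0
    linarith
  have const0 : ∀ M : List H, M.length = m → ∀ t : H, Fd M t = Fd M 0 := by
    intro M hM t
    simpa using const M hM 0 t
  have headadd : ∀ (u v : H) (L : List H), L.length + 1 = m →
      Fd ((u + v) :: L) 0 = Fd (u :: L) 0 + Fd (v :: L) 0 := by
    intro u v L hL
    have e1 : Fd ((u + v) :: L) 0 = Fd L 0 - Fd L (u + v) := by rw [Fd_cons, zero_add]
    have e2 : Fd (u :: L) 0 = Fd L 0 - Fd L u := by rw [Fd_cons, zero_add]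
    have e3 : Fd (v :: L) 0 = Fd (v :: L) u := (const0 (v :: L) (by simpa using hL) u).symm
    have e4 : Fd (v :: L) u = Fd L u - Fd L (u + v) := by rw [Fd_cons]
    linarith
  have dbl : ∀ (L A : List H), A.length + L.length = m →
      Fd (A ++ L.map (fun y => y + y)) 0 = 2 ^ L.length * Fd (A ++ L) 0 := by
    intro L
    induction L with
    | nil => intro A _; simp
    | cons b L ih =>
      intro A hA
      simp only [List.length_cons] at hA
      have lenAL : (A ++ L.map (fun y => y + y)).length + 1 = m := by
        simp only [List.length_append, List.length_map]; omega
      have p1 : (A ++ ((b + b) :: L.map (fun y => y + y))).Perm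
          ((b + b) :: (A ++ L.map (fun y => y + y))) := List.perm_middle
      have p2 : (A ++ (b :: L.map (fun y => y + y))).Perm
          (b :: (A ++ L.map (fun y => y + y))) := List.perm_middle
      have hdd := headadd b b (A ++ L.map (fun y => y + y)) lenAL
      have ihx := ih (A ++ [b]) (by simp only [List.length_append, List.length_cons, List.length_nil]; omega)
      calc Fd (A ++ (b :: L).map (fun y => y + y)) 0
          = Fd ((b + b) :: (A ++ L.map (fun y => y + y))) 0 := by
            simpa only [List.map_cons] using Fd_perm p1 0
        _ = 2 * Fd (b :: (A ++ L.map (fun y => y + y))) 0 := by rw [hdd]; ring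
        _ = 2 * Fd (A ++ (b :: L.map (fun y => y + y))) 0 := by rw [Fd_perm p2 0]
        _ = 2 * Fd ((A ++ [b]) ++ L.map (fun y => y + y)) 0 := by
            rw [← List.append_cons]
        _ = 2 * (2 ^ L.length * Fd ((A ++ [b]) ++ L) 0) := by rw [ihx]
        _ = 2 ^ (b :: L).length * Fd (A ++ b :: L) 0 := by
            rw [← List.append_cons]; simp only [List.length_cons]; ring
  intro L hL t
  rw [const0 L hL t]
  have h4 : Fd (L.map (fun y => y + y)) 0 = 4 * Fd L 0 := by
    simpa using Fd_homog L 0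
  have h2m : Fd (L.map (fun y => y + y)) 0 = 2 ^ m * Fd L 0 := by
    simpa [hL] using dbl L [] (by simp [hL])
  have hlt : (4 : ℝ) < 2 ^ m := by
    calc (4 : ℝ) < 8 := by norm_num
      _ = 2 ^ 3 := by norm_num
      _ ≤ 2 ^ m := by exact pow_le_pow_right₀ (by norm_num) hm
  nlinarith [h4, h2m]

theorem stmt13 {H : Type*} [NormedAddCommGroup H] [NormedSpace ℝ H]
    (hdim : 2 ≤ Module.rank ℝ H) (n : ℕ) (hn : 3 ≤ n) :
    (∀ x y : H, ‖x + y‖ ^ 2 + ‖x - y‖ ^ 2 = 2 * ‖x‖ ^ 2 + 2 * ‖y‖ ^ 2) ↔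
      ∀ x : Fin n → H,
        ∑ I : Finset (Fin n), (-1 : ℝ) ^ I.card * ‖∑ i ∈ I, x i‖ ^ 2 = 0 := by
  constructor
  · intro h x
    letI : InnerProductSpace ℝ H := InnerProductSpace.ofNorm ℝ (fun a b => by
      have := h a b
      have ha : ‖a + b‖ * ‖a + b‖ = ‖a + b‖ ^ 2 := (sq ‖a + b‖).symm
      have hb : ‖a - b‖ * ‖a - b‖ = ‖a - b‖ ^ 2 := (sq ‖a - b‖).symm
      have hc : ‖a‖ * ‖a‖ = ‖a‖ ^ 2 := (sq ‖a‖).symm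
      have hd : ‖b‖ * ‖b‖ = ‖b‖ ^ 2 := (sq ‖b‖).symm
      rw [ha, hb, hc, hd]
      linarith)
    have b0 := bridge x Finset.univ (0 : H)
    simp only [zero_add, Finset.powerset_univ] at b0
    rw [b0]
    refine Fd_ge3 _ ?_ 0
    simp only [List.length_map, Finset.length_toList, Finset.card_univ, Fintype.card_fin]
    omega
  · intro h
    have hyp : ∀ L : List H, L.length = n → Fd L 0 = 0 := by
      intro L hL
      subst hL
      have b0 := bridge L.get Finset.univ (0 : H)
      simp only [zero_add, Finset.powerset_univ] at b0
      have h0 := h L.get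
      rw [b0] at h0
      have hperm : (Finset.univ.toList.map L.get).Perm L := by
        have h1 : (Finset.univ.toList : List (Fin L.length)).Perm (List.finRange L.length) := by
          apply List.perm_of_nodup_nodup_toFinset_eq (Finset.nodup_toList _)
            (List.nodup_finRange _)
          rw [Finset.toList_toFinset, List.toFinset_finRange]
        calc (Finset.univ.toList.map L.get).Perm ((List.finRange L.length).map L.get) := h1.map _
          _ = List.ofFn L.get := List.ofFn_eq_map.symm
          _ = L := List.ofFn_get L
      rw [Fd_perm hperm 0] at h0
      exact h0
    have Pn : ∀ L : List H, L.length = n → ∀ t, Fd L t = 0 := by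
      intro L hL t
      cases L with
      | nil => simp only [List.length_nil] at hL; omega
      | cons x M =>
        have cst : ∀ w : H, Fd M w = Fd M 0 := by
          intro w
          have h0 := hyp (w :: M) (by simpa using hL)
          rw [Fd_cons, zero_add] at h0
          linarith
        rw [Fd_cons, cst t, cst (t + x), sub_self]
    have down : ∀ d m, 3 ≤ m → (∀ L : List H, L.length = m + d → ∀ t, Fd L t = 0) →
        ∀ L : List H, L.length = m → ∀ t, Fd L t = 0 := by
      intro d
      induction d with
      | zero => intro m _ hP; simpa using hP
      | succ k ih =>
        intro m hm hP
        exact Fd_step hm (ih (m + 1) (by omega) (fun L hL t => hP L (by omega) t))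
    have P3 : ∀ L : List H, L.length = 3 → ∀ t, Fd L t = 0 :=
      down (n - 3) 3 le_rfl (fun L hL t => Pn L (by omega) t)
    intro x y
    have h3 := P3 [x, y, -y] rfl 0
    simp only [Fd_cons, Fd_nil, zero_add, add_neg_cancel_right, add_neg_cancel, norm_zero,
      norm_neg] at h3
    rw [sub_eq_add_neg x y]
    nlinarith [h3]
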